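/- Let r be an integer with r ≡ 2 (mod 3) and r ≥ 5, and let K_{2r}^- denote the complete graph on 2r vertices with one edge removed. Then the edges of K_{2r}^- cannot be covered by r generalized triangle factors: for any r generalized triangle factors H_1,…,H_r on the same set of 2r vertices, the union of their edge sets does not contain a spanning subgraph isomorphic to K_{2r}^-. -/

import Mathlib

open SimpleGraph

/-- A generalized triangle factor: every connected component is a subgraph of a
triangle (a triangle, a path with two edges, a single edge, or an isolated
vertex); equivalently, every connected component has at most `3` vertices. -/
def IsGenTriangleFactor {V : Type*} (H : SimpleGraph V) : Prop :=
  ∀ C : H.ConnectedComponent, C.supp.ncard ≤ 3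

/-- `G` is the union of the `r` graphs `H 0, …, H (r-1)` on the same vertex set:
its edge set is the union of their edge sets. -/
def IsUnionOf {V : Type*} (G : SimpleGraph V) {r : ℕ} (H : Fin r → SimpleGraph V) : Prop :=
  G = ⨆ i, H i


open Finset in
open scoped Classical in
/-- Evenness of a symmetric, zero-diagonal double sum. -/
lemma even_double_sum_aux {α : Type*} [DecidableEq α] (A : Finset α) (f : α → α → ℕ)
    (hsymm : ∀ u v, f u v = f v u) (hdiag : ∀ v, f v v = 0) :
    Even (∑ v ∈ A, ∑ u ∈ A, f v u) := by
  induction A using Finset.induction_on with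
  | empty => simp
  | insert a A ha ih =>
    rw [Finset.sum_insert ha, Finset.sum_insert ha]
    have h1 : ∑ v ∈ A, ∑ u ∈ insert a A, f v u
        = ∑ v ∈ A, (f v a + ∑ u ∈ A, f v u) :=
      Finset.sum_congr rfl fun v _ => Finset.sum_insert ha
    rw [h1, Finset.sum_add_distrib, hdiag]
    have h2 : ∑ v ∈ A, f v a = ∑ u ∈ A, f a u :=
      Finset.sum_congr rfl fun v _ => hsymm v a
    obtain ⟨k, hk⟩ := ih
    exact ⟨∑ u ∈ A, f a u + k, by omega⟩

open Finset in
open scoped Classical in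
noncomputable def gdeg {n : ℕ} (H : SimpleGraph (Fin n)) (v : Fin n) : ℕ :=
  ({u | H.Adj v u} : Finset (Fin n)).card

open Finset in
noncomputable def gdsum {n : ℕ} (H : SimpleGraph (Fin n)) : ℕ :=
  ∑ v, (2 - gdeg H v)

open Finset in
open scoped Classical in
lemma factor_facts {n : ℕ} (hn : n % 3 = 1) (H : SimpleGraph (Fin n))
    (hH : IsGenTriangleFactor H) :
    (∀ v, gdeg H v ≤ 2) ∧ 2 ≤ gdsum H ∧ ∀ v0, gdeg H v0 = 1 → 4 ≤ gdsum H := by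
  set A : H.ConnectedComponent → Finset (Fin n) :=
    fun C => ({v | H.connectedComponentMk v = C} : Finset (Fin n)) with hA
  have hmem : ∀ v, v ∈ A (H.connectedComponentMk v) :=
    fun v => Finset.mem_filter.2 ⟨Finset.mem_univ v, rfl⟩
  have hclosed : ∀ {v u : Fin n} {C}, v ∈ A C → H.Adj v u → u ∈ A C := by
    intro v u C hv hadj
    simp only [hA, mem_filter, mem_univ, true_and] at hv ⊢
    rw [← hv]
    exact (ConnectedComponent.sound hadj.reachable).symm
  have hA3 : ∀ C, (A C).card ≤ 3 := by
    intro C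
    have h := hH C
    have : C.supp.ncard = (A C).card := by
      rw [Set.ncard_eq_toFinset_card']
      congr 1
      ext v
      simp [hA, ConnectedComponent.mem_supp_iff]
    omega
  have hAne : ∀ C, (A C).Nonempty := by
    intro C
    induction C using SimpleGraph.ConnectedComponent.ind with
    | _ v => exact ⟨v, hmem v⟩
  have hnbr : ∀ {v : Fin n} {C}, v ∈ A C →
      ({u | H.Adj v u} : Finset (Fin n)) ⊆ (A C).erase v := by
    intro v C hv u hu
    simp only [mem_filter, mem_univ, true_and] at hu
    exact Finset.mem_erase.2 ⟨(hu.ne).symm, hclosed hv hu⟩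
  have hdeg2 : ∀ v, gdeg H v ≤ 2 := by
    intro v
    have h1 := Finset.card_le_card (hnbr (hmem v))
    have h2 : ((A (H.connectedComponentMk v)).erase v).card
        = (A (H.connectedComponentMk v)).card - 1 :=
      Finset.card_erase_of_mem (hmem v)
    have := hA3 (H.connectedComponentMk v)
    unfold gdeg
    omega
  -- per-component degree sum within the component
  have hdegA : ∀ {v : Fin n} {C}, v ∈ A C →
      gdeg H v = ∑ u ∈ A C, (if H.Adj v u then 1 else 0) := by
    intro v C hv
    rw [← Finset.card_filter]
    unfold gdeg
    congr 1
    ext u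
    simp only [mem_filter, mem_univ, true_and]
    exact ⟨fun h => ⟨hclosed hv h, h⟩, fun h => h.2⟩
  have hevenC : ∀ C, Even (∑ v ∈ A C, gdeg H v) := by
    intro C
    have : ∑ v ∈ A C, gdeg H v
        = ∑ v ∈ A C, ∑ u ∈ A C, (if H.Adj v u then 1 else 0) :=
      Finset.sum_congr rfl fun v hv => hdegA hv
    rw [this]
    exact even_double_sum_aux _ _ (fun u v => by simp [SimpleGraph.adj_comm])
      (fun v => by simp)
  set c : H.ConnectedComponent → ℕ := fun C => ∑ v ∈ A C, (2 - gdeg H v) with hc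
  have hceven : ∀ C, Even (c C) := by
    intro C
    have h1 : c C + ∑ v ∈ A C, gdeg H v = 2 * (A C).card := by
      rw [hc, ← Finset.sum_add_distrib]
      rw [Finset.sum_congr rfl (fun v _ => Nat.sub_add_cancel (hdeg2 v))]
      rw [Finset.sum_const, smul_eq_mul, mul_comm]
    obtain ⟨k, hk⟩ := hevenC C
    rw [Nat.even_iff]
    omega
  have hc0 : ∀ C, c C = 0 → (A C).card = 3 := by
    intro C h0
    obtain ⟨v, hv⟩ := hAne C
    have hall : ∀ w ∈ A C, 2 - gdeg H w = 0 := by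
      intro w hw
      exact (Finset.sum_eq_zero_iff.1 h0) w hw
    have hdv : gdeg H v = 2 := by have := hall v hv; have := hdeg2 v; omega
    have h1 := Finset.card_le_card (hnbr hv)
    have h2 : ((A C).erase v).card = (A C).card - 1 := Finset.card_erase_of_mem hv
    have h3 := hA3 C
    unfold gdeg at hdv
    omega
  haveI : Fintype H.ConnectedComponent := Fintype.ofFinite _
  have hfib : ∀ g : Fin n → ℕ, ∑ C, ∑ v ∈ A C, g v = ∑ v, g v := by
    intro g
    exact Finset.sum_fiberwise _ _ _
  have hdsum : gdsum H = ∑ C, c C := (hfib _).symm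
  have hcards : ∑ C, (A C).card = n := by
    have h := hfib (fun _ => 1)
    calc ∑ C, (A C).card = ∑ C, ∑ _v ∈ A C, 1 := by
          exact Finset.sum_congr rfl fun C _ => by rw [Finset.sum_const, smul_eq_mul, mul_one]
      _ = ∑ _v : Fin n, 1 := h
      _ = n := by simp
  refine ⟨hdeg2, ?_, ?_⟩
  · by_contra hlt
    push_neg at hlt
    have hall0 : ∀ C, c C = 0 := by
      intro C
      have h1 : c C ≤ ∑ C, c C :=
        Finset.single_le_sum (fun C _ => Nat.zero_le _) (Finset.mem_univ C)
      obtain ⟨k, hk⟩ := hceven C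
      omega
    have h3 : ∑ C, (A C).card = 3 * Fintype.card H.ConnectedComponent := by
      rw [Finset.sum_congr rfl (fun C _ => hc0 C (hall0 C))]
      simp [Finset.card_univ, mul_comm]
    omega
  · intro v0 hv0
    by_contra hlt
    push_neg at hlt
    set B := H.connectedComponentMk v0 with hB
    have hv0B : v0 ∈ A B := hmem v0
    have hcB1 : 1 ≤ c B := by
      have h1 : 2 - gdeg H v0 ≤ c B :=
        Finset.single_le_sum (f := fun v => 2 - gdeg H v)
          (fun v _ => Nat.zero_le _) hv0B
      omega
    have hcB2 : 2 ≤ c B := by obtain ⟨k, hk⟩ := hceven B; omega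
    have hsplit : c B + ∑ C ∈ Finset.univ.erase B, c C = ∑ C, c C :=
      Finset.add_sum_erase _ _ (Finset.mem_univ B)
    have hrest : ∀ C ∈ Finset.univ.erase B, c C = 0 := by
      intro C hC
      have h1 : c C ≤ ∑ C ∈ Finset.univ.erase B, c C :=
        Finset.single_le_sum (fun C _ => Nat.zero_le _) hC
      obtain ⟨k, hk⟩ := hceven C
      rw [hdsum] at hlt
      omega
    -- the component of v0 has 2 or 3 elements
    have hu : ∃ u, H.Adj v0 u := by
      by_contra hno
      push_neg at hno
      have : gdeg H v0 = 0 := by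
        unfold gdeg
        rw [Finset.card_eq_zero]
        ext u
        simp [hno u]
      omega
    obtain ⟨u, hu⟩ := hu
    have huB : u ∈ A B := hclosed hv0B hu
    have hcardB : 2 ≤ (A B).card := by
      have : ({v0, u} : Finset (Fin n)) ⊆ A B := by
        intro x hx
        rcases Finset.mem_insert.1 hx with h | h
        · exact h ▸ hv0B
        · exact (Finset.mem_singleton.1 h) ▸ huB
      have h2 : ({v0, u} : Finset (Fin n)).card = 2 := by
        rw [Finset.card_insert_of_notMem (by simp [hu.ne]), Finset.card_singleton]
      calc 2 = ({v0, u} : Finset (Fin n)).card := h2.symm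
        _ ≤ _ := Finset.card_le_card this
    have hcardsplit : (A B).card + ∑ C ∈ Finset.univ.erase B, (A C).card
        = ∑ C, (A C).card :=
      Finset.add_sum_erase _ (fun C => (A C).card) (Finset.mem_univ B)
    have hrest3 : ∑ C ∈ Finset.univ.erase B, (A C).card
        = 3 * (Finset.univ.erase B).card := by
      rw [Finset.sum_congr rfl (fun C hC => hc0 C (hrest C hC))]
      simp [mul_comm]
    have := hA3 B
    omega


open Finset in
open scoped Classical in
/-- For `r ≡ 2 (mod 3)`, `r ≥ 5`, the union of any `r` generalized triangle
factors on `2r` vertices does not contain `K_{2r}` minus an edge as a spanning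
subgraph: there is no pair of vertices `a ≠ b` such that all pairs of distinct
vertices other than `{a, b}` are adjacent in the union. -/
theorem stmt12 (r : ℕ) (hr : 5 ≤ r) (hmod : r % 3 = 2)
    (H : Fin r → SimpleGraph (Fin (2 * r)))
    (hH : ∀ i, IsGenTriangleFactor (H i)) :
    ¬ ∃ a b : Fin (2 * r), a ≠ b ∧
      ∀ u v : Fin (2 * r), u ≠ v → s(u, v) ≠ s(a, b) → (⨆ i, H i).Adj u v := by
  rintro ⟨a, b, hab, hadj⟩
  have hn : (2 * r) % 3 = 1 := by omega
  have hfacts := fun i => factor_facts hn (H i) (hH i)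
  have hdeg2 : ∀ i v, gdeg (H i) v ≤ 2 := fun i => (hfacts i).1
  have hds2 : ∀ i, 2 ≤ gdsum (H i) := fun i => (hfacts i).2.1
  have hds4 : ∀ i v, gdeg (H i) v = 1 → 4 ≤ gdsum (H i) := fun i => (hfacts i).2.2
  set D : Fin (2*r) → ℕ := fun v => ∑ i, gdeg (H i) v with hD
  set dv : Fin (2*r) → ℕ := fun v => ∑ i, (2 - gdeg (H i) v) with hdv
  have hdvD : ∀ v, dv v + D v = 2 * r := by
    intro v
    rw [hdv, hD]
    show (∑ i, (2 - gdeg (H i) v)) + ∑ i, gdeg (H i) v = 2 * r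
    rw [← Finset.sum_add_distrib,
      Finset.sum_congr rfl (fun i _ => Nat.sub_add_cancel (hdeg2 i v)),
      Finset.sum_const, Finset.card_univ, Fintype.card_fin, smul_eq_mul, mul_comm]
  -- lower bounds on D via adjacency
  have key : ∀ (v : Fin (2*r)) (E : Finset (Fin (2*r))),
      (∀ u ∈ E, (⨆ i, H i).Adj v u) → E.card ≤ D v := by
    intro v E hE
    have hsub : E ⊆ Finset.univ.biUnion
        (fun i => ({u | (H i).Adj v u} : Finset (Fin (2*r)))) := by
      intro u hu
      obtain ⟨i, hi⟩ := iSup_adj.1 (hE u hu)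
      exact Finset.mem_biUnion.2 ⟨i, Finset.mem_univ i,
        Finset.mem_filter.2 ⟨Finset.mem_univ u, hi⟩⟩
    calc E.card ≤ _ := Finset.card_le_card hsub
      _ ≤ ∑ i, ({u | (H i).Adj v u} : Finset (Fin (2*r))).card :=
          Finset.card_biUnion_le
      _ = D v := rfl
  have hDlb : ∀ v : Fin (2*r), v ≠ a → v ≠ b → 2*r - 1 ≤ D v := by
    intro v hva hvb
    have h1 : (Finset.univ.erase v).card = 2*r - 1 := by
      rw [Finset.card_erase_of_mem (Finset.mem_univ v), Finset.card_univ, Fintype.card_fin]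
    rw [← h1]
    refine key v _ ?_
    intro u hu
    have huv : u ≠ v := (Finset.mem_erase.1 hu).1
    refine hadj v u huv.symm ?_
    intro heq
    rcases Sym2.eq_iff.1 heq with ⟨h1, h2⟩ | ⟨h1, h2⟩
    · exact hva h1
    · exact hvb h1
  have hDab : ∀ v : Fin (2*r), 2*r - 2 ≤ D v := by
    intro v
    by_cases hva : v = a
    · subst hva
      have h1 : ((Finset.univ.erase v).erase b).card = 2*r - 2 := by
        rw [Finset.card_erase_of_mem
            (Finset.mem_erase.2 ⟨Ne.symm hab, Finset.mem_univ b⟩),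
          Finset.card_erase_of_mem (Finset.mem_univ v), Finset.card_univ, Fintype.card_fin]
        omega
      rw [← h1]
      refine key v _ ?_
      intro u hu
      have hub : u ≠ b := (Finset.mem_erase.1 hu).1
      have huv : u ≠ v := (Finset.mem_erase.1 (Finset.mem_erase.1 hu).2).1
      refine hadj v u huv.symm ?_
      intro heq
      rcases Sym2.eq_iff.1 heq with ⟨h1, h2⟩ | ⟨h1, h2⟩
      · exact hub h2
      · exact hab h1
    · by_cases hvb : v = b
      · subst hvb
        have h1 : ((Finset.univ.erase v).erase a).card = 2*r - 2 := by
          rw [Finset.card_erase_of_mem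
              (Finset.mem_erase.2 ⟨hab, Finset.mem_univ a⟩),
            Finset.card_erase_of_mem (Finset.mem_univ v), Finset.card_univ, Fintype.card_fin]
          omega
        rw [← h1]
        refine key v _ ?_
        intro u hu
        have hua : u ≠ a := (Finset.mem_erase.1 hu).1
        have huv : u ≠ v := (Finset.mem_erase.1 (Finset.mem_erase.1 hu).2).1
        refine hadj v u huv.symm ?_
        intro heq
        rcases Sym2.eq_iff.1 heq with ⟨h1, h2⟩ | ⟨h1, h2⟩
        · exact huv h2
        · exact hua h2
      · have := hDlb v hva hvb
        omega
  -- global sums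
  have hswap : ∑ v, dv v = ∑ i, gdsum (H i) := by
    rw [hdv]
    show ∑ v, ∑ i, (2 - gdeg (H i) v) = _
    rw [Finset.sum_comm]
    rfl
  set W : Finset (Fin (2*r)) := (Finset.univ.erase a).erase b with hWdef
  have hWb : b ∈ Finset.univ.erase a := Finset.mem_erase.2 ⟨Ne.symm hab, Finset.mem_univ b⟩
  have hWcard : W.card = 2*r - 2 := by
    rw [hWdef, Finset.card_erase_of_mem hWb,
      Finset.card_erase_of_mem (Finset.mem_univ a), Finset.card_univ, Fintype.card_fin]
    omega
  have e1 : dv a + ∑ v ∈ Finset.univ.erase a, dv v = ∑ v, dv v :=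
    Finset.add_sum_erase _ dv (Finset.mem_univ a)
  have e2 : dv b + ∑ v ∈ W, dv v = ∑ v ∈ Finset.univ.erase a, dv v :=
    Finset.add_sum_erase _ dv hWb
  have hdvW : ∀ v ∈ W, dv v ≤ 1 := by
    intro v hv
    have hvb : v ≠ b := (Finset.mem_erase.1 hv).1
    have hva : v ≠ a := (Finset.mem_erase.1 (Finset.mem_erase.1 hv).2).1
    have := hDlb v hva hvb
    have := hdvD v
    omega
  have hdvab : dv a ≤ 2 ∧ dv b ≤ 2 := by
    have := hDab a; have := hDab b; have := hdvD a; have := hdvD b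
    omega
  set m := (W.filter (fun v => dv v = 1)).card with hm
  have hmW : ∑ v ∈ W, dv v = m := by
    rw [hm, Finset.card_filter]
    refine Finset.sum_congr rfl (fun v hv => ?_)
    have := hdvW v hv
    by_cases hc : dv v = 1 <;> simp [hc] <;> omega
  -- T : factors having a degree-1 vertex
  set T := (Finset.univ : Finset (Fin r)).filter (fun i => ∃ v, gdeg (H i) v = 1) with hT
  have t1 : T.card * 4 ≤ ∑ i ∈ T, gdsum (H i) := by
    have h := Finset.card_nsmul_le_sum T (fun i => gdsum (H i)) 4 ?_
    · rw [smul_eq_mul] at h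
      omega
    · intro i hi
      obtain ⟨v, hv⟩ := (Finset.mem_filter.1 hi).2
      exact hds4 i v hv
  set T' := (Finset.univ : Finset (Fin r)).filter (fun i => ¬∃ v, gdeg (H i) v = 1) with hT'
  have t2 : T'.card * 2 ≤ ∑ i ∈ T', gdsum (H i) := by
    have h := Finset.card_nsmul_le_sum T' (fun i => gdsum (H i)) 2 (fun i _ => hds2 i)
    rw [smul_eq_mul] at h
    omega
  have t3 : ∑ i ∈ T, gdsum (H i) + ∑ i ∈ T', gdsum (H i) = ∑ i, gdsum (H i) :=
    Finset.sum_filter_add_sum_filter_not _ _ _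
  have t4 : T.card + T'.card = r := by
    have h := Finset.card_filter_add_card_filter_not
      (s := (Finset.univ : Finset (Fin r))) (p := fun i => ∃ v, gdeg (H i) v = 1)
    rw [Finset.card_univ, Fintype.card_fin] at h
    exact h
  -- upper bound on total
  have htotup : ∑ i, gdsum (H i) ≤ 2*r + 2 := by
    have : ∑ v, dv v = dv a + (dv b + m) := by rw [← e1, ← e2, hmW]
    have hmub : m ≤ 2*r - 2 := hWcard ▸ Finset.card_filter_le _ _
    omega
  have hTcard : T.card ≤ 1 := by omega
  have hmlb : 2*r - 4 ≤ m := by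
    have : ∑ v, dv v = dv a + (dv b + m) := by rw [← e1, ← e2, hmW]
    omega
  -- every dv=1 vertex in W has a degree-1 factor
  have hodd : ∀ v ∈ W.filter (fun v => dv v = 1), ∃ i, gdeg (H i) v = 1 := by
    intro v hv
    have hv1 : dv v = 1 := (Finset.mem_filter.1 hv).2
    by_contra hno
    push_neg at hno
    have hDmod : D v % 2 = 0 := by
      rw [hD]
      show (∑ i, gdeg (H i) v) % 2 = 0
      rw [Finset.sum_nat_mod]
      rw [Finset.sum_congr rfl (fun i _ => by
        have h1 := hdeg2 i v
        have h2 := hno i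
        have : gdeg (H i) v % 2 = 0 := by omega
        exact this)]
      simp
    have := hdvD v
    omega
  -- T is a singleton {i0}
  obtain ⟨i0, hi0⟩ : ∃ i0, T = {i0} := by
    have hne : T.Nonempty := by
      have hmpos : 0 < m := by omega
      obtain ⟨v, hv⟩ := Finset.card_pos.1 hmpos
      obtain ⟨i, hi⟩ := hodd v hv
      exact ⟨i, Finset.mem_filter.2 ⟨Finset.mem_univ i, ⟨v, hi⟩⟩⟩
    have : T.card = 1 := le_antisymm hTcard (Finset.card_pos.2 hne)
    exact Finset.card_eq_one.1 this
  have hsubm : W.filter (fun v => dv v = 1)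
      ⊆ Finset.univ.filter (fun v => gdeg (H i0) v = 1) := by
    intro v hv
    obtain ⟨i, hi⟩ := hodd v hv
    have hiT : i ∈ T := Finset.mem_filter.2 ⟨Finset.mem_univ i, ⟨v, hi⟩⟩
    rw [hi0, Finset.mem_singleton] at hiT
    subst hiT
    exact Finset.mem_filter.2 ⟨Finset.mem_univ v, hi⟩
  have hti0 : (Finset.univ.filter (fun v => gdeg (H i0) v = 1)).card ≤ gdsum (H i0) := by
    rw [Finset.card_filter]
    show _ ≤ ∑ v, (2 - gdeg (H i0) v)
    refine Finset.sum_le_sum (fun v _ => ?_)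
    have := hdeg2 i0 v
    by_cases hc : gdeg (H i0) v = 1 <;> simp [hc] <;> omega
  have hgi0 : gdsum (H i0) ≤ 4 := by
    have e3 : gdsum (H i0) + ∑ i ∈ Finset.univ.erase i0, gdsum (H i) = ∑ i, gdsum (H i) :=
      Finset.add_sum_erase _ (fun i => gdsum (H i)) (Finset.mem_univ i0)
    have e4 := Finset.card_nsmul_le_sum (Finset.univ.erase i0)
      (fun i => gdsum (H i)) 2 (fun i _ => hds2 i)
    rw [smul_eq_mul] at e4
    have e5 : (Finset.univ.erase i0).card = r - 1 := by
      rw [Finset.card_erase_of_mem (Finset.mem_univ i0), Finset.card_univ, Fintype.card_fin]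
    rw [e5] at e4
    omega
  have hfinal := Finset.card_le_card hsubm
  omega
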